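/- arXiv:1305.1892 — 5 statements merged into one kernel-verified Lean document; each statement's English description precedes it below -/
import Mathlib

section
/- Kummer's transformation holds: for all complex a, b with b not a nonpositive integer and all complex z, ₁F₁(a; b; z) = e^z ₁F₁(b−a; b; −z). -/
open Finset Filter

private def kR (x : ℂ) (k : ℕ) : ℂ := ∏ j ∈ Finset.range k, (x + j)

private lemma kR_succ (x : ℂ) (k : ℕ) : kR x (k+1) = kR x k * (x + k) := by
  simp [kR, Finset.prod_range_succ]

private lemma kR_succ' (x : ℂ) (k : ℕ) : kR x (k+1) = x * kR (x+1) k := by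
  rw [kR, kR, Finset.prod_range_succ']
  simp only [Nat.cast_zero, add_zero, mul_comm]
  congr 1
  apply Finset.prod_congr rfl
  intro i _
  push_cast; ring

private lemma kR_add (x : ℂ) (m n : ℕ) : kR x (m+n) = kR x m * kR (x+m) n := by
  rw [kR, kR, kR, Finset.prod_range_add]
  congr 1
  apply Finset.prod_congr rfl
  intro i _
  push_cast; ring

private lemma vandermonde (n : ℕ) : ∀ b c : ℂ,
    ∑ j ∈ Finset.range (n+1),
      (-1:ℂ)^j * (n.choose j) * kR c j * kR (b + j) (n - j) = kR (b - c) n := by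
  induction n with
  | zero => intro b c; simp [kR]
  | succ n ih =>
    intro b c
    calc ∑ j ∈ Finset.range (n+1+1),
          (-1:ℂ)^j * ((n+1).choose j) * kR c j * kR (b + j) (n + 1 - j)
        = (∑ j ∈ Finset.range (n+1),
            (-1:ℂ)^(j+1) * ((n+1).choose (j+1)) * kR c (j+1) * kR (b + ↑(j+1)) (n + 1 - (j+1)))
          + (-1:ℂ)^0 * (((n+1).choose 0 : ℕ):ℂ) * kR c 0 * kR (b + ((0:ℕ):ℂ)) (n + 1 - 0) :=
          Finset.sum_range_succ' _ _
      _ = (∑ j ∈ Finset.range (n+1),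
            (((-1:ℂ)^(j+1) * (n.choose (j+1)) * kR c (j+1) * kR (b + ↑(j+1)) (n + 1 - (j+1)))
            + (-((-1:ℂ)^j * (n.choose j) * kR c j * ((c + j) * kR ((b+1) + j) (n - j))))))
          + (-1:ℂ)^0 * (((n+1).choose 0 : ℕ):ℂ) * kR c 0 * kR (b + ((0:ℕ):ℂ)) (n + 1 - 0) := by
          congr 1
          refine Finset.sum_congr rfl fun j hj => ?_
          rw [Nat.choose_succ_succ]
          have h2 : n + 1 - (j+1) = n - j := by omega
          rw [h2, kR_succ c j]
          have h3 : (b:ℂ) + ↑(j+1) = (b+1) + j := by push_cast; ring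
          rw [h3]
          push_cast
          ring
      _ = ((∑ j ∈ Finset.range (n+1),
            (-1:ℂ)^(j+1) * (n.choose (j+1)) * kR c (j+1) * kR (b + ↑(j+1)) (n + 1 - (j+1)))
          + (-1:ℂ)^0 * ((n.choose 0 : ℕ):ℂ) * kR c 0 * kR (b + ((0:ℕ):ℂ)) (n + 1 - 0))
          + ∑ j ∈ Finset.range (n+1),
            (-((-1:ℂ)^j * (n.choose j) * kR c j * ((c + j) * kR ((b+1) + j) (n - j)))) := by
          rw [Finset.sum_add_distrib]
          simp only [Nat.choose_zero_right]
          ring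
      _ = (∑ j ∈ Finset.range (n+1+1),
            (-1:ℂ)^j * (n.choose j) * kR c j * kR (b + j) (n + 1 - j))
          + ∑ j ∈ Finset.range (n+1),
            (-((-1:ℂ)^j * (n.choose j) * kR c j * ((c + j) * kR ((b+1) + j) (n - j)))) := by
          rw [Finset.sum_range_succ'
            (fun j => (-1:ℂ)^j * (n.choose j) * kR c j * kR (b + j) (n + 1 - j)) (n+1)]
      _ = (∑ j ∈ Finset.range (n+1),
            (-1:ℂ)^j * (n.choose j) * kR c j * kR (b + j) (n + 1 - j))
          + ∑ j ∈ Finset.range (n+1),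
            (-((-1:ℂ)^j * (n.choose j) * kR c j * ((c + j) * kR ((b+1) + j) (n - j)))) := by
          rw [Finset.sum_range_succ]
          simp
      _ = ∑ j ∈ Finset.range (n+1),
            (b - c) * ((-1:ℂ)^j * (n.choose j) * kR c j * kR ((b+1) + j) (n - j)) := by
          rw [← Finset.sum_add_distrib]
          refine Finset.sum_congr rfl fun j hj => ?_
          have hj' : j ≤ n := by simpa [Nat.lt_succ_iff] using hj
          have h4 : n + 1 - j = (n - j) + 1 := by omega
          rw [h4, kR_succ']
          have h5 : (b:ℂ) + j + 1 = (b+1) + j := by ring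
          rw [h5]
          ring
      _ = kR (b - c) (n+1) := by
          rw [← Finset.mul_sum, ih (b+1) c, kR_succ']
          congr 1
          ring

private lemma kR_ne_zero {b : ℂ} (hb : ∀ n : ℕ, b ≠ -n) (k : ℕ) : kR b k ≠ 0 := by
  refine Finset.prod_ne_zero_iff.2 fun j _ => ?_
  intro h
  exact hb j (by linear_combination h)

private lemma summable_norm_kummer {b : ℂ} (hb : ∀ n : ℕ, b ≠ -n) (c z : ℂ) :
    Summable fun k : ℕ => ‖kR c k / kR b k * z ^ k / (k.factorial : ℂ)‖ := by
  rw [summable_norm_iff]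
  set f : ℕ → ℂ := fun k => kR c k / kR b k * z ^ k / (k.factorial : ℂ) with hf
  have hbk : ∀ k : ℕ, (b + (k:ℂ)) ≠ 0 := by
    intro k h
    exact hb k (by linear_combination h)
  have hratio : ∀ k : ℕ, f (k+1) = f k * ((c + k) / (b + k) * (z / (k+1))) := by
    intro k
    simp only [hf, kR_succ]
    have h1 : (((k+1).factorial : ℕ) : ℂ) = (k.factorial : ℂ) * (k+1) := by
      push_cast [Nat.factorial_succ]; ring
    rw [h1]
    have h2 : ((k:ℂ)+1) ≠ 0 := by
      have : ((k+1:ℕ):ℂ) ≠ 0 := Nat.cast_ne_zero.2 (Nat.succ_ne_zero k)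
      push_cast at this; exact this
    have h3 := kR_ne_zero hb k
    have h4 : ((k.factorial : ℕ):ℂ) ≠ 0 := Nat.cast_ne_zero.2 k.factorial_ne_zero
    field_simp
    ring
  have hnb : Tendsto (fun k : ℕ => ‖b + (k:ℂ)‖) atTop atTop := by
    refine tendsto_atTop_mono (fun k => ?_) (tendsto_atTop_add_const_right _ (-‖b‖)
      tendsto_natCast_atTop_atTop)
    have := norm_sub_norm_le ((k:ℂ)) (-b)
    simp only [sub_neg_eq_add, Complex.norm_natCast, norm_neg] at this
    calc (k:ℝ) + -‖b‖ = ‖(k:ℂ)‖ - ‖-b‖ := by simp [sub_eq_add_neg]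
      _ ≤ ‖(k:ℂ) + b‖ := by simpa [sub_neg_eq_add] using norm_sub_norm_le ((k:ℂ)) (-b)
      _ = ‖b + (k:ℂ)‖ := by rw [add_comm]
  have hnk : Tendsto (fun k : ℕ => ‖((k:ℂ) + 1)‖) atTop atTop := by
    refine tendsto_atTop_mono (fun k => ?_) (tendsto_atTop_add_const_right _ 1
      tendsto_natCast_atTop_atTop)
    have : ((k:ℂ) + 1) = ((k+1 : ℕ) : ℂ) := by push_cast; ring
    rw [this, Complex.norm_natCast]
    push_cast; linarith
  have h0 : Tendsto (fun k : ℕ => (c + k) / (b + k) * (z / (k+1))) atTop (nhds 0) := by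
    have h1 : Tendsto (fun k : ℕ => (c + (k:ℂ)) / (b + k)) atTop (nhds 1) := by
      have h2 : Tendsto (fun k : ℕ => 1 + (c - b) / (b + (k:ℂ))) atTop (nhds (1 + 0)) := by
        refine Tendsto.const_add _ ?_
        rw [tendsto_zero_iff_norm_tendsto_zero]
        simp only [norm_div]
        exact tendsto_const_nhds.div_atTop hnb
      rw [add_zero] at h2
      refine h2.congr fun k => ?_
      field_simp [hbk k]
      ring
    have h3 : Tendsto (fun k : ℕ => z / ((k:ℂ)+1)) atTop (nhds 0) := by
      rw [tendsto_zero_iff_norm_tendsto_zero]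
      simp only [norm_div]
      exact tendsto_const_nhds.div_atTop hnk
    simpa using h1.mul h3
  have hev : ∀ᶠ k in atTop, ‖f (k+1)‖ ≤ (1/2 : ℝ) * ‖f k‖ := by
    have := h0.norm
    rw [norm_zero] at this
    filter_upwards [this.eventually_le_const (by norm_num : (0:ℝ) < 1/2)] with k hk
    rw [hratio k, norm_mul]
    calc ‖f k‖ * ‖(c + ↑k) / (b + ↑k) * (z / (↑k + 1))‖ ≤ ‖f k‖ * (1/2) := by
          exact mul_le_mul_of_nonneg_left hk (norm_nonneg _)
      _ = 1/2 * ‖f k‖ := by ring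
  exact summable_of_ratio_norm_eventually_le (by norm_num) hev

private lemma coeff_eq {b : ℂ} (hb : ∀ n : ℕ, b ≠ -n) (a z : ℂ) (n : ℕ) :
    ∑ j ∈ Finset.range (n+1),
      (z^(n-j) / (((n-j).factorial : ℕ):ℂ)) *
        (kR (b-a) j / kR b j * (-z)^j / ((j.factorial : ℕ):ℂ))
    = kR a n / kR b n * z^n / ((n.factorial : ℕ):ℂ) := by
  have hbn := kR_ne_zero hb
  have hfac : ∀ m : ℕ, ((m.factorial : ℕ):ℂ) ≠ 0 := fun m => Nat.cast_ne_zero.2 m.factorial_ne_zero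
  have key : ∀ j ∈ Finset.range (n+1),
      (z^(n-j) / (((n-j).factorial : ℕ):ℂ)) *
        (kR (b-a) j / kR b j * (-z)^j / ((j.factorial : ℕ):ℂ))
      = ((-1:ℂ)^j * (n.choose j) * kR (b-a) j * kR (b + j) (n - j)) *
          (z^n / (kR b n * ((n.factorial : ℕ):ℂ))) := by
    intro j hj
    have hj' : j ≤ n := by simpa [Nat.lt_succ_iff] using hj
    have hkb : kR b n = kR b j * kR (b + j) (n - j) := by
      conv_lhs => rw [show n = j + (n - j) by omega]
      exact kR_add b j (n - j)
    have hnf : ((n.factorial : ℕ):ℂ) = (n.choose j : ℕ) * ((j.factorial : ℕ):ℂ) *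
        (((n-j).factorial : ℕ):ℂ) := by
      rw [← Nat.cast_mul, ← Nat.cast_mul, Nat.choose_mul_factorial_mul_factorial hj']
    have hz : z^(n-j) * z^j = z^n := by
      rw [← pow_add]; congr 1; omega
    have hneg : (-z)^j = (-1:ℂ)^j * z^j := by
      rw [neg_pow]
    have hch : ((n.choose j : ℕ):ℂ) ≠ 0 := Nat.cast_ne_zero.2 (Nat.choose_pos hj').ne'
    have hW : kR b n * ((n.factorial : ℕ):ℂ) ≠ 0 := mul_ne_zero (hbn n) (hfac n)
    conv_rhs => rw [← mul_div_assoc]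
    rw [eq_div_iff hW, hkb, hnf, hneg, ← hz]
    field_simp
    have e1 : kR b j * (kR b j)⁻¹ = 1 := mul_inv_cancel₀ (hbn j)
    have e2 : ((j.factorial : ℕ):ℂ) * (((j.factorial : ℕ):ℂ))⁻¹ = 1 := mul_inv_cancel₀ (hfac j)
    have e3 : (((n-j).factorial : ℕ):ℂ) * ((((n-j).factorial : ℕ):ℂ))⁻¹ = 1 :=
      mul_inv_cancel₀ (hfac (n-j))
    linear_combination
      (z^(n-j) * z^j * kR (b-a) j * kR (b + (j:ℂ)) (n-j) *
        ((((n-j).factorial : ℕ):ℂ) * ((((n-j).factorial : ℕ):ℂ))⁻¹) *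
        (kR b j * (kR b j)⁻¹)) * e2 +
      (z^(n-j) * z^j * kR (b-a) j * kR (b + (j:ℂ)) (n-j) *
        ((((n-j).factorial : ℕ):ℂ) * ((((n-j).factorial : ℕ):ℂ))⁻¹)) * e1 +
      (z^(n-j) * z^j * kR (b-a) j * kR (b + (j:ℂ)) (n-j)) * e3
  rw [Finset.sum_congr rfl key, ← Finset.sum_mul, vandermonde n b (b - a)]
  have : b - (b - a) = a := by ring
  rw [this]
  field_simp

/-- The Kummer confluent hypergeometric function `₁F₁(a; b; z)`. -/
noncomputable def kummerM (a b : ℂ) (z : ℂ) : ℂ :=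
  ∑' k : ℕ, (∏ j ∈ Finset.range k, (a + j)) / (∏ j ∈ Finset.range k, (b + j)) *
    z ^ k / (k.factorial : ℂ)

private lemma kummerM_eq (a b z : ℂ) :
    kummerM a b z = ∑' k : ℕ, kR a k / kR b k * z ^ k / ((k.factorial : ℕ):ℂ) := rfl

/-- Kummer's transformation `₁F₁(a; b; z) = e^z ₁F₁(b−a; b; −z)`. -/
theorem stmt_8 (a b : ℂ) (hb : ∀ n : ℕ, b ≠ -n) (z : ℂ) :
    kummerM a b z = Complex.exp z * kummerM (b - a) b (-z) := by
  have hexp : Complex.exp z = ∑' n : ℕ, z^n / ((n.factorial : ℕ):ℂ) := by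
    rw [Complex.exp_eq_exp_ℂ, NormedSpace.exp_eq_tsum_div]
  have hf : Summable fun k : ℕ => ‖z^k / ((k.factorial : ℕ):ℂ)‖ := by
    have : ∀ k : ℕ, ‖z^k / ((k.factorial : ℕ):ℂ)‖ = ‖z‖^k / (k.factorial : ℝ) := by
      intro k
      rw [norm_div, norm_pow, Complex.norm_natCast]
    rw [funext this]
    exact Real.summable_pow_div_factorial ‖z‖
  have hg : Summable fun k : ℕ => ‖kR (b-a) k / kR b k * (-z) ^ k / ((k.factorial : ℕ):ℂ)‖ :=
    summable_norm_kummer hb (b-a) (-z)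
  rw [hexp, kummerM_eq, kummerM_eq,
    tsum_mul_tsum_eq_tsum_sum_antidiagonal_of_summable_norm hf hg]
  refine tsum_congr fun n => ?_
  rw [Finset.Nat.sum_antidiagonal_eq_sum_range_succ_mk]
  have hrefl := Finset.sum_range_reflect
    (fun k => z^k / ((k.factorial : ℕ):ℂ) *
      (kR (b-a) (n-k) / kR b (n-k) * (-z)^(n-k) / (((n-k).factorial : ℕ):ℂ))) (n+1)
  simp only [Nat.add_sub_cancel] at hrefl
  rw [← hrefl]
  rw [← coeff_eq hb a z n]
  refine Finset.sum_congr rfl fun j hj => ?_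
  have hj' : j ≤ n := by simpa [Nat.lt_succ_iff] using hj
  have h1 : n - (n - j) = j := by omega
  rw [h1]
end

section
/- With hypergeometric Bernoulli polynomials defined by Σ_{n≥0} B_n^{(a,b)}(x) z^n/n! = e^{xz}/Φ_{a,b}(z), the symmetry B_n^{(a,b)}(1−x) = (−1)^n B_n^{(b,a)}(x) holds for all n ≥ 0 and all x. -/
open PowerSeries

section Aux
open Finset

open Finset

/-- step recurrence -/
lemma chu_step (n : ℕ) (b c : ℝ) :
    ∑ k ∈ range (n + 2),
        ((-1 : ℝ) ^ k * ((n + 1).choose k) * ∏ j ∈ range k, (b + j)) /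
          (∏ j ∈ range k, (c + j)) =
      (∑ k ∈ range (n + 1),
        ((-1 : ℝ) ^ k * (n.choose k) * ∏ j ∈ range k, (b + j)) /
          (∏ j ∈ range k, (c + j))) -
      (b / c) * ∑ k ∈ range (n + 1),
        ((-1 : ℝ) ^ k * (n.choose k) * ∏ j ∈ range k, (b + 1 + j)) /
          (∏ j ∈ range k, (c + 1 + j)) := by
  have shiftb : ∀ k : ℕ, (∏ j ∈ range (k + 1), (b + j)) = b * ∏ j ∈ range k, (b + 1 + j) := by
    intro k
    rw [prod_range_succ']
    simp only [Nat.cast_zero, add_zero]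
    rw [mul_comm]
    congr 1
    apply prod_congr rfl
    intro j _
    push_cast; ring
  have shiftc : ∀ k : ℕ, (∏ j ∈ range (k + 1), (c + j)) = c * ∏ j ∈ range k, (c + 1 + j) := by
    intro k
    rw [prod_range_succ']
    simp only [Nat.cast_zero, add_zero]
    rw [mul_comm]
    congr 1
    apply prod_congr rfl
    intro j _
    push_cast; ring
  rw [Finset.sum_range_succ' _ (n + 1)]
  have pascal : ∀ k : ℕ, ((n + 1).choose (k + 1) : ℝ) = n.choose (k + 1) + n.choose k := by
    intro k; rw [Nat.choose_succ_succ]; push_cast; ring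
  have hsplit : ∀ k ∈ range (n + 1),
      ((-1 : ℝ) ^ (k + 1) * ((n + 1).choose (k + 1)) * ∏ j ∈ range (k + 1), (b + j)) /
        (∏ j ∈ range (k + 1), (c + j)) =
      ((-1 : ℝ) ^ (k + 1) * (n.choose (k + 1)) * ∏ j ∈ range (k + 1), (b + j)) /
        (∏ j ∈ range (k + 1), (c + j)) +
      (-1) * ((b / c) *
        (((-1 : ℝ) ^ k * (n.choose k) * ∏ j ∈ range k, (b + 1 + j)) /
          (∏ j ∈ range k, (c + 1 + j)))) := by
    intro k _
    rw [pascal k, shiftb k, shiftc k]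
    rcases eq_or_ne c 0 with hc | hc
    · simp [hc]
    rcases eq_or_ne (∏ j ∈ range k, (c + 1 + j)) 0 with hP | hP
    · simp [hP, mul_div_assoc]
    field_simp
    ring
  rw [Finset.sum_congr rfl hsplit, Finset.sum_add_distrib]
  rw [← Finset.mul_sum, ← Finset.mul_sum]
  have h1 : (∑ k ∈ range (n + 1),
      ((-1 : ℝ) ^ (k + 1) * (n.choose (k + 1)) * ∏ j ∈ range (k + 1), (b + j)) /
        (∏ j ∈ range (k + 1), (c + j))) +
      ((-1 : ℝ) ^ 0 * ((n + 1).choose 0) * ∏ j ∈ range 0, (b + j)) /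
        (∏ j ∈ range 0, (c + j)) =
      ∑ k ∈ range (n + 1),
        ((-1 : ℝ) ^ k * (n.choose k) * ∏ j ∈ range k, (b + j)) /
          (∏ j ∈ range k, (c + j)) := by
    rw [Finset.sum_range_succ (fun k =>
      ((-1 : ℝ) ^ (k + 1) * (n.choose (k + 1)) * ∏ j ∈ range (k + 1), (b + j)) /
        (∏ j ∈ range (k + 1), (c + j))) n,
      Finset.sum_range_succ' (fun k =>
      ((-1 : ℝ) ^ k * (n.choose k) * ∏ j ∈ range k, (b + j)) /
        (∏ j ∈ range k, (c + j))) n]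
    simp [Nat.choose_succ_self]
  linarith [h1]

lemma chu_closed : ∀ n : ℕ, ∀ b c : ℝ, 0 < c →
    ∑ k ∈ range (n + 1),
        ((-1 : ℝ) ^ k * (n.choose k) * ∏ j ∈ range k, (b + j)) /
          (∏ j ∈ range k, (c + j)) =
      (∏ j ∈ range n, (c - b + j)) / (∏ j ∈ range n, (c + j)) := by
  intro n
  induction n with
  | zero => intro b c _; simp
  | succ n ih =>
    intro b c hc
    rw [chu_step n b c, ih b c hc, ih (b + 1) (c + 1) (by linarith)]
    have hD : (0 : ℝ) < ∏ j ∈ range n, (c + j) := by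
      apply Finset.prod_pos; intro j _; positivity
    have hshiftc : (∏ j ∈ range n, (c + 1 + j)) = (∏ j ∈ range n, (c + j)) * (c + n) / c := by
      have h1 : (∏ j ∈ range (n + 1), (c + j)) = c * ∏ j ∈ range n, (c + 1 + j) := by
        rw [prod_range_succ']
        simp only [Nat.cast_zero, add_zero]
        rw [mul_comm]
        congr 1
        apply prod_congr rfl
        intro j _; push_cast; ring
      rw [prod_range_succ] at h1
      field_simp
      linarith [h1]
    have hnum : (∏ j ∈ range n, (c + 1 - (b + 1) + j)) = ∏ j ∈ range n, (c - b + j) := by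
      apply prod_congr rfl; intro j _; ring_nf
    rw [hnum, hshiftc, prod_range_succ, prod_range_succ]
    have hcn : (0 : ℝ) < c + n := by positivity
    field_simp
    ring

/-- The formal power series of the Kummer function `Φ_{a,b}(z) = ₁F₁(a; a+b; z)`. -/
noncomputable def PhiSeries (a b : ℝ) : PowerSeries ℝ :=
  PowerSeries.mk fun k =>
    (∏ j ∈ Finset.range k, (a + j)) / (∏ j ∈ Finset.range k, (a + b + j)) /
      (k.factorial : ℝ)

open Finset in
lemma kummer (a b : ℝ) (ha : 0 < a) (hb : 0 < b) :
    PowerSeries.exp ℝ * rescale (-1) (PhiSeries b a) = PhiSeries a b := by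
  ext n
  rw [coeff_mul, Finset.Nat.sum_antidiagonal_eq_sum_range_succ_mk]
  simp only [coeff_exp, coeff_rescale, PhiSeries, coeff_mk]
  rw [← Finset.sum_range_reflect]
  have hba : ∀ k : ℕ, (∏ j ∈ range k, (b + a + j)) = ∏ j ∈ range k, (a + b + j) := by
    intro k; apply prod_congr rfl; intro j _; ring
  have hPne : ∀ k : ℕ, (∏ j ∈ range k, (a + b + j)) ≠ 0 := by
    intro k
    exact ne_of_gt (Finset.prod_pos fun j _ => by positivity)
  have key := chu_closed n b (a + b) (by linarith)
  have hnum : (∏ j ∈ range n, (a + b - b + j)) = ∏ j ∈ range n, (a + j) := by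
    apply prod_congr rfl; intro j _; ring_nf
  rw [hnum] at key
  calc ∑ k ∈ range (n + 1), (algebraMap ℚ ℝ) (1 / (n + 1 - 1 - k).factorial) *
          ((-1 : ℝ) ^ (n - (n + 1 - 1 - k)) *
            ((∏ j ∈ range (n - (n + 1 - 1 - k)), (b + j)) /
              (∏ j ∈ range (n - (n + 1 - 1 - k)), (b + a + j)) /
              ((n - (n + 1 - 1 - k)).factorial : ℝ)))
      = ∑ k ∈ range (n + 1),
          (((-1 : ℝ) ^ k * (n.choose k) * ∏ j ∈ range k, (b + j)) /
            (∏ j ∈ range k, (a + b + j))) / (n.factorial : ℝ) := by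
        apply Finset.sum_congr rfl
        intro k hk
        have hk' : k ≤ n := by
          simp only [Finset.mem_range] at hk; omega
        have h1 : n + 1 - 1 - k = n - k := by omega
        have h2 : n - (n - k) = k := by omega
        rw [h1, h2, hba]
        have hfact : ((n.choose k : ℝ)) * ((k.factorial : ℝ) * ((n - k).factorial : ℝ)) =
            (n.factorial : ℝ) := by
          have := Nat.choose_mul_factorial_mul_factorial hk'
          push_cast [← this]
          ring
        have hkf : (k.factorial : ℝ) ≠ 0 := by positivity
        have hnkf : ((n - k).factorial : ℝ) ≠ 0 := by positivity
        have hnf : (n.factorial : ℝ) ≠ 0 := by positivity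
        rw [map_div₀, map_one]
        push_cast
        field_simp
        linear_combination (-1 : ℝ) * hfact
    _ = (∏ j ∈ range n, (a + j)) / (∏ j ∈ range n, (a + b + j)) / (n.factorial : ℝ) := by
        rw [← Finset.sum_div, key]

end Aux

/-- Symmetry of the hypergeometric Bernoulli polynomials:
`B_n^{(a,b)}(1−x) = (−1)^n B_n^{(b,a)}(x)`, where the two families are encoded by their
generating functions `Σ Bab_n(1-x) z^n/n! = e^{(1−x)z}/Φ_{a,b}(z)` and
`Σ Bba_n(x) z^n/n! = e^{xz}/Φ_{b,a}(z)`. -/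
theorem stmt_10 (a b : ℝ) (ha : 0 < a) (hb : 0 < b) (x : ℝ) (Bab Bba : ℕ → ℝ)
    (hab : PowerSeries.mk (fun n => Bab n / n.factorial) * PhiSeries a b =
           PowerSeries.mk (fun n => (1 - x) ^ n / n.factorial))
    (hba : PowerSeries.mk (fun n => Bba n / n.factorial) * PhiSeries b a =
           PowerSeries.mk (fun n => x ^ n / n.factorial)) :
    ∀ n : ℕ, Bab n = (-1 : ℝ) ^ n * Bba n := by
  have hPhi_ne : PhiSeries a b ≠ 0 := by
    intro h
    have h0 : constantCoeff (PhiSeries a b) = 1 := by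
      simp [PhiSeries, ← coeff_zero_eq_constantCoeff_apply]
    rw [h] at h0
    simp at h0
  have hE : ∀ y : ℝ, PowerSeries.mk (fun n => y ^ n / (n.factorial : ℝ)) =
      rescale y (PowerSeries.exp ℝ) := by
    intro y
    ext n
    simp [coeff_rescale, coeff_exp, map_div₀, div_eq_mul_inv]
  have h3 : PowerSeries.mk (fun n => ((-1 : ℝ) ^ n * Bba n) / n.factorial) *
      rescale (-1) (PhiSeries b a) = rescale (-x) (PowerSeries.exp ℝ) := by
    have h := congrArg (rescale (-1 : ℝ)) hba
    rw [map_mul, hE x, rescale_rescale] at h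
    have hresc : rescale (-1 : ℝ) (PowerSeries.mk fun n => Bba n / n.factorial) =
        PowerSeries.mk fun n => ((-1 : ℝ) ^ n * Bba n) / n.factorial := by
      ext m
      simp [coeff_rescale, coeff_mk, mul_div_assoc]
    rw [hresc] at h
    rw [h]
    norm_num
  have main : PowerSeries.mk (fun n => Bab n / (n.factorial : ℝ)) * PhiSeries a b =
      PowerSeries.mk (fun n => ((-1 : ℝ) ^ n * Bba n) / n.factorial) * PhiSeries a b := by
    rw [hab, hE (1 - x)]
    have hsplit : rescale (1 - x) (PowerSeries.exp ℝ) =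
        PowerSeries.exp ℝ * rescale (-x) (PowerSeries.exp ℝ) := by
      have h4 := exp_mul_exp_eq_exp_add (1 : ℝ) (-x)
      rw [rescale_one] at h4
      simp only [RingHom.id_apply] at h4
      rw [show (1 : ℝ) + -x = 1 - x by ring] at h4
      exact h4.symm
    rw [hsplit, ← h3, ← kummer a b ha hb]
    ring
  have hcancel := mul_right_cancel₀ hPhi_ne main
  intro n
  have hc := congrArg (coeff n) hcancel
  simp only [coeff_mk] at hc
  have hnf : ((n.factorial : ℝ)) ≠ 0 := by positivity
  field_simp at hc
  exact hc
end

section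
/- Define B_n^{(b)}(x), for integer b ≥ 1, by Σ_{n≥0} B_n^{(b)}(x) z^n/n! = e^{xz}/Φ_{1,b}(z) where Φ_{1,b}(z) = (b!/z^b)(e^z − Σ_{s<b} z^s/s!). Then Dilcher's recursion holds: for all k ≥ b and all x, B_k^{(b)}(x+1) = Σ_{p=0}^{b−1} C(k,p) B_{k−p}^{(b)}(x) + C(k,b) x^{k−b}. -/
open PowerSeries

/-- The power series of `Φ_{1,b}(z) = (b!/z^b)(e^z − Σ_{s<b} z^s/s!) = Σ_k b!/(b+k)! z^k`. -/
noncomputable def Phi1bSeries (b : ℕ) : PowerSeries ℝ :=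
  PowerSeries.mk fun k => (b.factorial : ℝ) / ((b + k).factorial : ℝ)

lemma phi_ne_zero (b : ℕ) : Phi1bSeries b ≠ 0 := by
  intro h
  have h0 : PowerSeries.constantCoeff (R := ℝ) (Phi1bSeries b) = 1 := by
    simp [Phi1bSeries, Nat.factorial_ne_zero,
      div_self (by exact_mod_cast b.factorial_ne_zero : ((b.factorial : ℝ) ≠ 0))]
  rw [h] at h0
  simp at h0

lemma exp_mul (x : ℝ) :
    PowerSeries.mk (fun n => (x + 1) ^ n / n.factorial) =
      PowerSeries.mk (fun n => (1 : ℝ) / n.factorial) *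
        PowerSeries.mk (fun n => x ^ n / n.factorial) := by
  ext k
  rw [PowerSeries.coeff_mul, Finset.Nat.sum_antidiagonal_eq_sum_range_succ_mk]
  simp only [coeff_mk]
  rw [add_comm x 1, add_pow, Finset.sum_div]
  refine Finset.sum_congr rfl fun p hp => ?_
  have hpk : p ≤ k := Finset.mem_range_succ_iff.mp hp
  rw [Nat.cast_choose ℝ hpk]
  have h1 : (p.factorial : ℝ) ≠ 0 := by exact_mod_cast p.factorial_ne_zero
  have h2 : ((k - p).factorial : ℝ) ≠ 0 := by exact_mod_cast (k - p).factorial_ne_zero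
  have h3 : (k.factorial : ℝ) ≠ 0 := by exact_mod_cast k.factorial_ne_zero
  field_simp
  ring

/-- Dilcher's recursion `B_k^{(b)}(x+1) = Σ_{p<b} C(k,p) B_{k−p}^{(b)}(x) + C(k,b) x^{k−b}`,
where `P n = B_n^{(b)}(x+1)` and `Q n = B_n^{(b)}(x)` are encoded via the generating
function `Σ_n B_n^{(b)}(y) z^n/n! = e^{yz}/Φ_{1,b}(z)`. -/
theorem stmt_14 (b : ℕ) (hb : 1 ≤ b) (x : ℝ) (P Q : ℕ → ℝ)
    (hP : PowerSeries.mk (fun n => P n / n.factorial) * Phi1bSeries b =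
          PowerSeries.mk (fun n => (x + 1) ^ n / n.factorial))
    (hQ : PowerSeries.mk (fun n => Q n / n.factorial) * Phi1bSeries b =
          PowerSeries.mk (fun n => x ^ n / n.factorial)) :
    ∀ k : ℕ, b ≤ k →
      P k = ∑ p ∈ Finset.range b, (k.choose p : ℝ) * Q (k - p) +
        (k.choose b : ℝ) * x ^ (k - b) := by
  -- cancel Φ to get mk(P/n!) = exp * mk(Q/n!)
  have hPQ : PowerSeries.mk (fun n => P n / n.factorial) =
      PowerSeries.mk (fun n => (1 : ℝ) / n.factorial) *
        PowerSeries.mk (fun n => Q n / n.factorial) := by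
    apply mul_right_cancel₀ (phi_ne_zero b)
    rw [hP, exp_mul, mul_assoc, hQ]
  -- key : P k equals the full binomial convolution
  have key : ∀ k : ℕ, P k = ∑ p ∈ Finset.range (k + 1),
      (k.choose p : ℝ) * Q (k - p) := by
    intro k
    have hc := congrArg (PowerSeries.coeff (R := ℝ) k) hPQ
    rw [PowerSeries.coeff_mul, Finset.Nat.sum_antidiagonal_eq_sum_range_succ_mk] at hc
    simp only [coeff_mk] at hc
    have h3 : (k.factorial : ℝ) ≠ 0 := by exact_mod_cast k.factorial_ne_zero
    have : P k = (k.factorial : ℝ) *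
        ∑ p ∈ Finset.range (k + 1), (1 : ℝ) / p.factorial * (Q (k - p) / (k - p).factorial) := by
      rw [← hc]; field_simp
    rw [this, Finset.mul_sum]
    refine Finset.sum_congr rfl fun p hp => ?_
    have hpk : p ≤ k := Finset.mem_range_succ_iff.mp hp
    rw [Nat.cast_choose ℝ hpk]
    have h1 : (p.factorial : ℝ) ≠ 0 := by exact_mod_cast p.factorial_ne_zero
    have h2 : ((k - p).factorial : ℝ) ≠ 0 := by exact_mod_cast (k - p).factorial_ne_zero
    field_simp
  intro k hk
  set n := k - b with hn
  have hkbn : k = b + n := by omega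
  -- coefficient n of hQ
  have hc := congrArg (PowerSeries.coeff (R := ℝ) n) hQ
  rw [PowerSeries.coeff_mul, Finset.Nat.sum_antidiagonal_eq_sum_range_succ_mk] at hc
  simp only [Phi1bSeries, coeff_mk] at hc
  -- split the full sum
  rw [key k]
  rw [Finset.range_eq_Ico, ← Finset.sum_Ico_consecutive _ (Nat.zero_le b) (by omega : b ≤ k + 1),
    ← Finset.range_eq_Ico]
  congr 1
  -- tail sum equals C(k,b) x^n
  rw [Finset.sum_Ico_eq_sum_range]
  have hkb1 : k + 1 - b = n + 1 := by omega
  rw [hkb1, ← Finset.sum_range_reflect]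
  simp only [Nat.add_sub_cancel]
  have hbfac : ((b.factorial : ℝ)) ≠ 0 := by exact_mod_cast b.factorial_ne_zero
  have hterm : ∀ j ∈ Finset.range (n + 1),
      (k.choose (b + (n - j)) : ℝ) * Q (k - (b + (n - j))) =
        (k.factorial : ℝ) / b.factorial *
          (Q j / j.factorial * ((b.factorial : ℝ) / (b + (n - j)).factorial)) := by
    intro j hj
    have hjn : j ≤ n := Finset.mem_range_succ_iff.mp hj
    have h1 : k - (b + (n - j)) = j := by omega
    have h2 : b + (n - j) ≤ k := by omega
    rw [h1, Nat.cast_choose ℝ h2]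
    have h3 : k - (b + (n - j)) = j := h1
    rw [h3]
    have e1 : ((b + (n - j)).factorial : ℝ) ≠ 0 := by
      exact_mod_cast (b + (n - j)).factorial_ne_zero
    have e2 : (j.factorial : ℝ) ≠ 0 := by exact_mod_cast j.factorial_ne_zero
    field_simp
  rw [Finset.sum_congr rfl hterm, ← Finset.mul_sum, hc]
  have hnfac : ((n.factorial : ℝ)) ≠ 0 := by exact_mod_cast n.factorial_ne_zero
  rw [Nat.cast_choose ℝ hk, ← hn]
  field_simp
end

section
/- For positive integers a, b, the formal power series f(z) = Φ_{a,b+1}(z)/Φ_{a,b}(z) (quotient of the two Kummer series, well-defined since Φ_{a,b}(0)=1) satisfies the Riccati-type differential equation z f'(z) = (a+b)(1 − f(z)) − z f(z) + (b/(a+b)) z f(z)². -/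
open PowerSeries

lemma aux_prod (x : ℝ) (k : ℕ) :
    (∏ j ∈ Finset.range k, (x + 1 + (j : ℝ))) * x
      = (∏ j ∈ Finset.range k, (x + (j : ℝ))) * (x + k) := by
  induction k with
  | zero => simp
  | succ n ih =>
    rw [Finset.prod_range_succ, Finset.prod_range_succ]
    push_cast
    linear_combination (x + 1 + (n : ℝ)) * ih

lemma prod_pos (x : ℝ) (hx : 0 < x) (k : ℕ) :
    0 < ∏ j ∈ Finset.range k, (x + (j : ℝ)) := by
  apply Finset.prod_pos
  intro j _
  positivity

lemma phi_shift_prod (x y : ℝ) (k : ℕ) :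
    (∏ j ∈ Finset.range k, (x + (y + 1) + (j : ℝ)))
      = ∏ j ∈ Finset.range k, ((x + y) + 1 + (j : ℝ)) := by
  apply Finset.prod_congr rfl
  intro j _; ring

lemma phi_deriv (x y : ℝ) (hx : 0 < x) (hy : 0 < y) :
    PowerSeries.derivativeFun (PhiSeries x y)
      = PhiSeries x y - PowerSeries.C (y / (x + y)) * PhiSeries x (y + 1) := by
  ext k
  rw [show PowerSeries.derivativeFun (PhiSeries x y) = PowerSeries.derivative ℝ (PhiSeries x y) from rfl, PowerSeries.coeff_derivativeFun]
  simp only [PhiSeries, coeff_mk, map_sub, PowerSeries.coeff_C_mul]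
  rw [phi_shift_prod]
  have hQ : (0:ℝ) < ∏ j ∈ Finset.range k, ((x + y) + (j : ℝ)) := prod_pos _ (by linarith) k
  have hQ' : (0:ℝ) < ∏ j ∈ Finset.range (k+1), ((x + y) + (j : ℝ)) := prod_pos _ (by linarith) (k+1)
  have hR : (0:ℝ) < ∏ j ∈ Finset.range k, ((x + y) + 1 + (j : ℝ)) := prod_pos _ (by linarith) k
  have hfac : (0:ℝ) < (k.factorial : ℝ) := by positivity
  have hrel := aux_prod (x + y) k
  rw [Finset.prod_range_succ, Finset.prod_range_succ, Nat.factorial_succ]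
  push_cast
  have hxy : x + y ≠ 0 := by linarith
  field_simp
  linear_combination (-y) * hrel

lemma phi_X_deriv (x y : ℝ) (hx : 0 < x) (hy : 0 < y) :
    PowerSeries.X * PowerSeries.derivativeFun (PhiSeries x (y + 1))
      = PowerSeries.C (x + y) * (PhiSeries x y - PhiSeries x (y + 1)) := by
  ext k
  cases k with
  | zero =>
    simp [PhiSeries]
  | succ n =>
    rw [PowerSeries.coeff_succ_X_mul, show PowerSeries.derivativeFun (PhiSeries x (y + 1)) = PowerSeries.derivative ℝ (PhiSeries x (y + 1)) from rfl, PowerSeries.coeff_derivativeFun]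
    simp only [PhiSeries, coeff_mk, map_sub, PowerSeries.coeff_C_mul]
    have hQ : (0:ℝ) < ∏ j ∈ Finset.range (n+1), ((x + y) + (j : ℝ)) := prod_pos _ (by linarith) _
    have hR : (0:ℝ) < ∏ j ∈ Finset.range (n+1), ((x + y) + 1 + (j : ℝ)) := prod_pos _ (by linarith) _
    have hfac : (0:ℝ) < ((n+1).factorial : ℝ) := by positivity
    have hrel := aux_prod (x + y) (n+1)
    push_cast at hrel ⊢
    field_simp
    rw [phi_shift_prod]
    linear_combination (-1 : ℝ) * hrel

/-- The quotient `f = Φ_{a,b+1}/Φ_{a,b}` satisfies the Riccati-type equation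
`z f' = (a+b)(1 − f) − z f + (b/(a+b)) z f²`. -/
theorem stmt_17 (a b : ℕ) (ha : 1 ≤ a) (hb : 1 ≤ b) (f : PowerSeries ℝ)
    (hf : f * PhiSeries a b = PhiSeries a (b + 1)) :
    PowerSeries.X * PowerSeries.derivativeFun f =
      PowerSeries.C ((a : ℝ) + b) * (1 - f) - PowerSeries.X * f +
        PowerSeries.C ((b : ℝ) / ((a : ℝ) + b)) * (PowerSeries.X * f ^ 2) := by
  have hx : (0:ℝ) < (a:ℝ) := by exact_mod_cast ha
  have hy : (0:ℝ) < (b:ℝ) := by exact_mod_cast hb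
  have h1 := phi_deriv (a:ℝ) (b:ℝ) hx hy
  have h2 := phi_X_deriv (a:ℝ) (b:ℝ) hx hy
  have h3 : PowerSeries.derivativeFun f * PhiSeries a b
      + f * PowerSeries.derivativeFun (PhiSeries a b)
      = PowerSeries.derivativeFun (PhiSeries a (b+1)) := by
    rw [← hf, PowerSeries.derivativeFun_mul, smul_eq_mul, smul_eq_mul]
    ring
  have hΦ : PhiSeries (a:ℝ) (b:ℝ) ≠ 0 := by
    intro h
    have := congrArg (PowerSeries.constantCoeff) h
    simp [PhiSeries, PowerSeries.coeff_zero_eq_constantCoeff.symm] at this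
  apply mul_right_cancel₀ hΦ
  linear_combination (PowerSeries.X : PowerSeries ℝ) * h3 + h2
    - PowerSeries.X * f * h1
    + (PowerSeries.C ((a:ℝ)+b) - PowerSeries.C ((b:ℝ)/((a:ℝ)+b)) * PowerSeries.X * f) * hf
end

section
/- Define coefficients c_k by the formal power series identity Φ_{a,b+1}(z)/Φ_{a,b}(z) = 1 + ((a+b)/b) Σ_{k≥1} c_{k+1} z^k (so c_{k+1} = (b/(a+b)) × the k-th Taylor coefficient of the quotient). Then for every p ≥ 1: Σ_{ℓ=1}^{p} B(a+p−ℓ, b) · (p!/(p−ℓ)!) · c_{ℓ+1} = −(b p/((a+b)(a+b+p))) B(a+p, b), where B(u,v) = Γ(u)Γ(v)/Γ(u+v). -/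
open PowerSeries

/-- The Beta function `B(u,v) = Γ(u)Γ(v)/Γ(u+v)`. -/
noncomputable def Beta (u v : ℝ) : ℝ := Real.Gamma u * Real.Gamma v / Real.Gamma (u + v)

private lemma prodP_pos {x : ℝ} (hx : 0 < x) (k : ℕ) :
    0 < ∏ j ∈ Finset.range k, (x + j) :=
  Finset.prod_pos fun j _ => by positivity

private lemma Gamma_add_nat {x : ℝ} (hx : 0 < x) (k : ℕ) :
    Real.Gamma (x + k) = (∏ j ∈ Finset.range k, (x + j)) * Real.Gamma x := by
  induction k with
  | zero => simp
  | succ n ih =>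
    have h : x + ((n : ℕ) + 1 : ℕ) = (x + n) + 1 := by push_cast; ring
    rw [h, Real.Gamma_add_one (by positivity), ih, Finset.prod_range_succ]
    ring

private lemma Beta_shift {a b : ℝ} (ha : 0 < a) (hb : 0 < b) (k : ℕ) :
    Beta (a + k) b =
      (∏ j ∈ Finset.range k, (a + j)) / (∏ j ∈ Finset.range k, (a + b + j)) * Beta a b := by
  have h1 := Gamma_add_nat ha k
  have h2 := Gamma_add_nat (show (0:ℝ) < a + b by positivity) k
  have hab : a + (k : ℝ) + b = (a + b) + k := by ring
  unfold Beta
  rw [hab, h1, h2]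
  have hga : Real.Gamma a ≠ 0 := (Real.Gamma_pos_of_pos ha).ne'
  have hgab : Real.Gamma (a + b) ≠ 0 :=
    (Real.Gamma_pos_of_pos (show (0:ℝ) < a + b by positivity)).ne'
  have hp1 := (prodP_pos ha k).ne'
  have hp2 := (prodP_pos (show (0:ℝ) < a + b by positivity) k).ne'
  field_simp

/-- Linear recurrence for the coefficients `c_{k+1} = (b/(a+b)) · [z^k](Φ_{a,b+1}/Φ_{a,b})`,
i.e. for the hypergeometric zeta values `ζ_{a,b}^H(k+1)`. -/
theorem stmt_18 (a b : ℝ) (ha : 0 < a) (hb : 0 < b) (f : PowerSeries ℝ) (c : ℕ → ℝ)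
    (hf : f * PhiSeries a b = PhiSeries a (b + 1))
    (hc : ∀ k : ℕ, 1 ≤ k → c (k + 1) = b / (a + b) * PowerSeries.coeff k f) :
    ∀ p : ℕ, 1 ≤ p →
      ∑ ℓ ∈ Finset.Icc 1 p,
          Beta (a + p - ℓ) b * ((p.factorial : ℝ) / ((p - ℓ).factorial : ℝ)) * c (ℓ + 1) =
        -(b * p / ((a + b) * (a + b + p))) * Beta (a + p) b := by
  intro p hp
  have hab : (0:ℝ) < a + b := by positivity
  have hf0 : PowerSeries.coeff 0 f = 1 := by
    have h := congrArg (PowerSeries.coeff 0) hf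
    simpa [PowerSeries.coeff_mul, PhiSeries] using h
  have hkey := congrArg (PowerSeries.coeff p) hf
  rw [PowerSeries.coeff_mul, Finset.Nat.sum_antidiagonal_eq_sum_range_succ_mk,
    Finset.sum_range_succ'] at hkey
  have hsum0 : ∑ i ∈ Finset.range p,
      PowerSeries.coeff (i + 1) f * PowerSeries.coeff (p - (i + 1)) (PhiSeries a b)
      = PowerSeries.coeff p (PhiSeries a (b + 1)) - PowerSeries.coeff p (PhiSeries a b) := by
    rw [hf0, one_mul, Nat.sub_zero] at hkey
    linarith
  -- rewrite the target sum
  rw [← Finset.Ico_add_one_right_eq_Icc, Finset.sum_Ico_eq_sum_range, Nat.add_sub_cancel]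
  have hterm : ∀ i ∈ Finset.range p,
      Beta (a + p - ((1 + i : ℕ) : ℝ)) b * ((p.factorial : ℝ) / ((p - (1 + i)).factorial : ℝ)) * c (1 + i + 1)
      = Beta a b * (b / (a + b)) * (p.factorial : ℝ) *
          (PowerSeries.coeff (i + 1) f * PowerSeries.coeff (p - (i + 1)) (PhiSeries a b)) := by
    intro i hi
    have hi' : i + 1 ≤ p := Finset.mem_range.mp hi
    have h1 : (1 : ℕ) + i = i + 1 := by omega
    simp only [h1]
    have hcast : a + (p : ℝ) - ((i + 1 : ℕ) : ℝ) = a + ((p - (i + 1) : ℕ) : ℝ) := by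
      rw [Nat.cast_sub hi']
      push_cast
      ring
    rw [hcast, Beta_shift ha hb, hc (i + 1) (by omega)]
    have hφ : PowerSeries.coeff (p - (i + 1)) (PhiSeries a b)
        = (∏ j ∈ Finset.range (p - (i+1)), (a + j)) / (∏ j ∈ Finset.range (p - (i+1)), (a + b + j))
          / ((p - (i+1)).factorial : ℝ) := by
      simp [PhiSeries]
    rw [hφ]
    have hfac : ((p - (i+1)).factorial : ℝ) ≠ 0 := Nat.cast_ne_zero.mpr (Nat.factorial_ne_zero _)
    field_simp
  rw [Finset.sum_congr rfl hterm, ← Finset.mul_sum, hsum0]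
  -- now pure computation
  have hφp : PowerSeries.coeff p (PhiSeries a b)
      = (∏ j ∈ Finset.range p, (a + j)) / (∏ j ∈ Finset.range p, (a + b + j))
        / (p.factorial : ℝ) := by simp [PhiSeries]
  have hφp' : PowerSeries.coeff p (PhiSeries a (b + 1))
      = (∏ j ∈ Finset.range p, (a + j)) / (∏ j ∈ Finset.range p, (a + (b+1) + j))
        / (p.factorial : ℝ) := by simp [PhiSeries]
  have hshift : (a + b) * (∏ j ∈ Finset.range p, (a + (b+1) + j))
      = (∏ j ∈ Finset.range p, (a + b + j)) * (a + b + p) := by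
    have e1 : ∏ j ∈ Finset.range (p+1), (a + b + j)
        = (∏ j ∈ Finset.range p, (a + b + ((j : ℕ) + 1 : ℕ))) * (a + b + (0 : ℕ)) :=
      Finset.prod_range_succ' _ p
    have e2 : ∏ j ∈ Finset.range (p+1), (a + b + j)
        = (∏ j ∈ Finset.range p, (a + b + j)) * (a + b + p) := Finset.prod_range_succ _ p
    have e3 : ∏ j ∈ Finset.range p, (a + b + ((j : ℕ) + 1 : ℕ))
        = ∏ j ∈ Finset.range p, (a + (b+1) + j) := by
      apply Finset.prod_congr rfl
      intro j _
      push_cast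
      ring
    rw [e3] at e1
    rw [← e2, e1]
    push_cast
    ring
  rw [hφp, hφp', Beta_shift ha hb p]
  have hPa := (prodP_pos ha p).ne'
  have hPab := (prodP_pos hab p).ne'
  have hPab1 := (prodP_pos (show (0:ℝ) < a + (b+1) by positivity) p).ne'
  have habp : (0:ℝ) < a + b + p := by positivity
  have hfacp : (p.factorial : ℝ) ≠ 0 := Nat.cast_ne_zero.mpr (Nat.factorial_ne_zero _)
  have hR : (∏ j ∈ Finset.range p, (a + (b+1) + (j:ℝ)))
      = (∏ j ∈ Finset.range p, (a + b + (j:ℝ))) * (a + b + p) / (a + b) := by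
    rw [eq_div_iff hab.ne']
    linarith [hshift]
  rw [hR]
  field_simp
  ring
end
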